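/- Let n ≥ 1, let A, X be n×n complex matrices and let p be a polynomial with complex coefficients such that XA − AX = p(X). Then the matrix XA − AX is nilpotent and every element μ of the spectrum of X satisfies p(μ) = 0. -/

import Mathlib

open Polynomial Module LinearMap

section Helpers

variable {M : Type*} [AddCommGroup M] [Module ℂ M] [FiniteDimensional ℂ M]

/-- On the generalized eigenspace of `x` at `ν`, the restriction of `aeval x r` is
`r.eval ν` plus nilpotent. -/
lemma aux_nilp (x : Module.End ℂ M) (ν : ℂ) (r : ℂ[X])
    (hc : ∀ s : ℂ[X], Set.MapsTo (aeval x s) (x.maxGenEigenspace ν) (x.maxGenEigenspace ν)) :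
    IsNilpotent ((aeval x r).restrict (hc r) -
      algebraMap ℂ (Module.End ℂ (x.maxGenEigenspace ν)) (r.eval ν)) := by
  have hdvd : (X - C ν) ∣ (r - C (r.eval ν)) := dvd_iff_isRoot.mpr (by simp)
  obtain ⟨q, hq⟩ := hdvd
  have hsub : Set.MapsTo (x - algebraMap ℂ (Module.End ℂ M) ν)
      (x.maxGenEigenspace ν) (x.maxGenEigenspace ν) := by
    have : (x - algebraMap ℂ (Module.End ℂ M) ν) = aeval x (X - C ν) := by simp
    rw [this]; exact hc _
  have key : (aeval x r).restrict (hc r) -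
      algebraMap ℂ (Module.End ℂ (x.maxGenEigenspace ν)) (r.eval ν) =
      ((x - algebraMap ℂ (Module.End ℂ M) ν).restrict hsub) * ((aeval x q).restrict (hc q)) := by
    ext v
    have : aeval x r - algebraMap ℂ (Module.End ℂ M) (r.eval ν) =
        (x - algebraMap ℂ (Module.End ℂ M) ν) * aeval x q := by
      have h1 : aeval x (r - C (r.eval ν)) = aeval x ((X - C ν) * q) := by rw [hq]
      simpa [map_sub, map_mul, aeval_C, aeval_X] using h1
    have hv : (aeval x r) v.1 - (r.eval ν) • v.1 =
        (x - algebraMap ℂ (Module.End ℂ M) ν) ((aeval x q) v.1) := by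
      have := congrFun (congrArg DFunLike.coe this) v.1
      simpa [Module.End.mul_apply, LinearMap.sub_apply, Module.algebraMap_end_apply] using this
    exact hv
  rw [key]
  have hcomm : Commute ((x - algebraMap ℂ (Module.End ℂ M) ν).restrict hsub)
      ((aeval x q).restrict (hc q)) := by
    apply LinearMap.restrict_commute
    have : (x - algebraMap ℂ (Module.End ℂ M) ν) = aeval x (X - C ν) := by simp
    rw [this]
    exact (Commute.all ((X : ℂ[X]) - C ν) q).map (aeval x)
  exact hcomm.isNilpotent_mul_right
    (x.isNilpotent_restrict_maxGenEigenspace_sub_algebraMap ν)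

lemma aux_trace (x : Module.End ℂ M) (r : ℂ[X])
    (hfin : {ν : ℂ | x.maxGenEigenspace ν ≠ ⊥}.Finite) :
    trace ℂ M (aeval x r) =
      ∑ ν ∈ hfin.toFinset,
        (finrank ℂ (x.maxGenEigenspace ν) : ℂ) * r.eval ν := by
  classical
  have hcomm : ∀ s : ℂ[X], Commute x (aeval x s) := by
    intro s
    have h0 := (Commute.all (X : ℂ[X]) s).map (aeval x)
    rwa [aeval_X] at h0
  have hc : ∀ (ν : ℂ) (s : ℂ[X]),
      Set.MapsTo (aeval x s) (x.maxGenEigenspace ν) (x.maxGenEigenspace ν) :=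
    fun ν s => Module.End.mapsTo_maxGenEigenspace_of_comm (hcomm s) ν
  have hds := DirectSum.isInternal_submodule_of_iSupIndep_of_iSup_eq_top
    x.independent_maxGenEigenspace x.iSup_maxGenEigenspace_eq_top
  rw [LinearMap.trace_eq_sum_trace_restrict' hds hfin (fun ν => hc ν r)]
  refine Finset.sum_congr rfl fun ν _ => ?_
  have := LinearMap.trace_comp_eq_mul_of_commute_of_isNilpotent (R := ℂ)
    (M := x.maxGenEigenspace ν) (f := LinearMap.id) (g := (aeval x r).restrict (hc ν r))
    (r.eval ν) (Commute.one_left _) (aux_nilp x ν r (hc ν))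
  simpa [LinearMap.trace_id, mul_comm] using this
end Helpers

section Main

variable {M : Type*} [AddCommGroup M] [Module ℂ M] [FiniteDimensional ℂ M]

lemma key_eval (x a : Module.End ℂ M) (p : ℂ[X]) (hx : x * a - a * x = aeval x p)
    (μ : ℂ) (hμ : μ ∈ spectrum ℂ x) : p.eval μ = 0 := by
  classical
  have hfin : {ν : ℂ | x.maxGenEigenspace ν ≠ ⊥}.Finite :=
    WellFoundedGT.finite_ne_bot_of_iSupIndep x.independent_maxGenEigenspace
  have hev : x.HasEigenvalue μ := Module.End.hasEigenvalue_iff_mem_spectrum.mpr hμ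
  have hne : x.maxGenEigenspace μ ≠ ⊥ := by
    intro hbot
    apply hev
    rw [eq_bot_iff, ← hbot]
    exact fun v hv => (x.genEigenspace μ).monotone le_top hv
  have hμS : μ ∈ hfin.toFinset := hfin.mem_toFinset.mpr hne
  set q : ℂ[X] := ∏ ν ∈ hfin.toFinset.erase μ, (X - C ν) with hq
  set c : Module.End ℂ M := aeval x q with hcdef
  have hcq : Commute x c := by
    have h0 := (Commute.all (X : ℂ[X]) q).map (aeval x)
    rwa [aeval_X] at h0
  have haux : a * x * c = (a * c) * x := by
    rw [mul_assoc, hcq.eq, ← mul_assoc]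
  have heq : aeval x (p * q) = x * (a * c) - (a * c) * x := by
    calc aeval x (p * q) = (x * a - a * x) * c := by rw [map_mul, hx]
    _ = x * (a * c) - (a * c) * x := by rw [sub_mul, mul_assoc, haux]
  have h0 : trace ℂ M (aeval x (p * q)) = 0 := by
    rw [heq, map_sub, LinearMap.trace_mul_comm, sub_self]
  have h1 := aux_trace x (p * q) hfin
  have hsum : ∑ ν ∈ hfin.toFinset,
      (finrank ℂ (x.maxGenEigenspace ν) : ℂ) * (p * q).eval ν =
      (finrank ℂ (x.maxGenEigenspace μ) : ℂ) * (p.eval μ * q.eval μ) := by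
    rw [Finset.sum_eq_single_of_mem μ hμS]
    · rw [eval_mul]
    · intro ν hν hνμ
      have hzero : q.eval ν = 0 := by
        rw [hq, eval_prod]
        exact Finset.prod_eq_zero (Finset.mem_erase.mpr ⟨hνμ, hν⟩) (by simp)
      rw [eval_mul, hzero, mul_zero, mul_zero]
  have hpos : (finrank ℂ (x.maxGenEigenspace μ) : ℂ) ≠ 0 := by
    have : Nontrivial (x.maxGenEigenspace μ) := Submodule.nontrivial_iff_ne_bot.mpr hne
    have h2 : 0 < finrank ℂ (x.maxGenEigenspace μ) := Module.finrank_pos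
    exact_mod_cast h2.ne'
  have hqμ : q.eval μ ≠ 0 := by
    rw [hq, eval_prod]
    refine Finset.prod_ne_zero_iff.mpr fun ν hν => ?_
    have := (Finset.mem_erase.mp hν).1
    simpa [sub_ne_zero] using (Ne.symm this)
  have := h0.symm.trans (h1.trans hsum)
  rcases mul_eq_zero.mp this.symm with h' | h'
  · exact absurd h' hpos
  · rcases mul_eq_zero.mp h' with h'' | h''
    · exact h''
    · exact absurd h'' hqμ

end Main

theorem stmt2 (n : ℕ) (hn : 1 ≤ n) (A X : Matrix (Fin n) (Fin n) ℂ)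
    (p : Polynomial ℂ) (h : X * A - A * X = Polynomial.aeval X p) :
    IsNilpotent (X * A - A * X) ∧
      ∀ μ ∈ spectrum ℂ X, Polynomial.eval μ p = 0 := by
  classical
  set e := Matrix.toLinAlgEquiv (Pi.basisFun ℂ (Fin n)) with he
  set x := e X with hxdef
  set a := e A with hadef
  have hx : x * a - a * x = aeval x p := by
    have h2 := congrArg e h
    rw [map_sub, map_mul, map_mul] at h2
    rw [h2]
    simpa using (aeval_algHom_apply e.toAlgHom X p).symm
  have hspec : spectrum ℂ X = spectrum ℂ x := (AlgEquiv.spectrum_eq e X).symm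
  have key : ∀ μ ∈ spectrum ℂ X, p.eval μ = 0 := by
    intro μ hμ
    exact key_eval x a p hx μ (hspec ▸ hμ)
  refine ⟨?_, key⟩
  rw [h]
  have hint : IsIntegral ℂ x := Algebra.IsIntegral.isIntegral x
  have hmonic : (minpoly ℂ x).Monic := minpoly.monic hint
  have hfac := (IsAlgClosed.splits (minpoly ℂ x)).eq_prod_roots_of_monic hmonic
  have hdvd : minpoly ℂ x ∣ p ^ Multiset.card (minpoly ℂ x).roots := by
    rw [hfac]
    have hd := Multiset.prod_dvd_prod_of_dvd (S := (minpoly ℂ x).roots)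
      (fun r => Polynomial.X - C r) (fun _ => p) ?_
    · simpa [Multiset.map_const', Multiset.prod_replicate] using hd
    · intro r hr
      have hroot : (minpoly ℂ x).IsRoot r := isRoot_of_mem_roots hr
      have hrs : r ∈ spectrum ℂ x :=
        Module.End.hasEigenvalue_iff_mem_spectrum.mp
          (Module.End.hasEigenvalue_iff_isRoot.mpr hroot)
      exact dvd_iff_isRoot.mpr (key r (by rwa [hspec]))
  obtain ⟨t, ht⟩ := hdvd
  have hnil : IsNilpotent (aeval x p) := by
    refine ⟨Multiset.card (minpoly ℂ x).roots, ?_⟩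
    rw [← map_pow, ht, map_mul, minpoly.aeval, zero_mul]
  have htrans : Polynomial.aeval X p = e.symm (aeval x p) := by
    have h4 := aeval_algHom_apply e.symm.toAlgHom x p
    simpa [hxdef] using h4
  rw [htrans]
  exact hnil.map e.symm
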